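/- Fix a real p ∈ (0,1) and an integer K ≥ 2. For every permutation σ of {1,…,K} with σ ≠ id, there exists m ∈ {1,…,K−1} such that d_S(σ) ≥ d_S(σ̂_m) for every subset S ⊆ {1,…,K} with |S| ≥ 2. -/

import Mathlib

/-- Ordinal Attraction choice probability of item `i` from display set `S`
under the ranking `σ`. -/
noncomputable def oa {K : ℕ} (p : ℝ) (σ : Equiv.Perm (Fin K))
    (S : Finset (Fin K)) (i : Fin K) : ℝ :=
  (1 - p) * p ^ ((S.filter fun j => σ j ≤ σ i).card - 1) / (1 - p ^ S.card)

/-- `d_S(σ)`: KL divergence on `S` between the OA model with the identity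
ranking and the OA model with ranking `σ`. -/
noncomputable def dS {K : ℕ} (p : ℝ) (S : Finset (Fin K)) (σ : Equiv.Perm (Fin K)) : ℝ :=
  ∑ i ∈ S, oa p 1 S i * Real.log (oa p 1 S i / oa p σ S i)

/-- The adjacent transposition `σ̂_m` swapping (0-indexed) items `m` and `m+1`. -/
def adjSwap (K : ℕ) (m : ℕ) : Equiv.Perm (Fin K) :=
  if h : m + 1 < K then Equiv.swap ⟨m, Nat.lt_of_succ_lt h⟩ ⟨m + 1, h⟩ else 1

/-! ### Auxiliary material -/

/-- Rank of `i` within `S` under the ranking `σ`. -/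
def rkOA {K : ℕ} (σ : Equiv.Perm (Fin K)) (S : Finset (Fin K)) (i : Fin K) : ℕ :=
  (S.filter fun j => σ j ≤ σ i).card

lemma rkOA_pos {K : ℕ} (σ : Equiv.Perm (Fin K)) {S : Finset (Fin K)} {i : Fin K}
    (hi : i ∈ S) : 1 ≤ rkOA σ S i :=
  Finset.card_pos.mpr ⟨i, Finset.mem_filter.mpr ⟨hi, le_refl _⟩⟩

section facts
variable {K : ℕ} {p : ℝ} (hp0 : 0 < p) (hp1 : p < 1) {S : Finset (Fin K)} (hS : 2 ≤ S.card)
include hp0 hp1 hS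

lemma oa_denom_pos : 0 < 1 - p ^ S.card := by
  have h : p ^ S.card < 1 := pow_lt_one₀ hp0.le hp1 (by omega)
  linarith

lemma oa_pos (σ : Equiv.Perm (Fin K)) (i : Fin K) : 0 < oa p σ S i :=
  div_pos (mul_pos (by linarith) (pow_pos hp0 _)) (oa_denom_pos hp0 hp1 hS)

lemma log_oa (σ : Equiv.Perm (Fin K)) {i : Fin K} (hi : i ∈ S) :
    Real.log (oa p σ S i) =
      Real.log (1 - p) + ((rkOA σ S i : ℝ) - 1) * Real.log p - Real.log (1 - p ^ S.card) := by
  have h1p : (0:ℝ) < 1 - p := by linarith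
  have hd := oa_denom_pos hp0 hp1 hS
  rw [oa, Real.log_div (by positivity) (by positivity),
    Real.log_mul (by positivity) (by positivity), Real.log_pow]
  have : ((rkOA σ S i - 1 : ℕ) : ℝ) = (rkOA σ S i : ℝ) - 1 := by
    have := rkOA_pos σ hi
    push_cast [this]
    ring
  rw [show (S.filter fun j => σ j ≤ σ i).card = rkOA σ S i from rfl, this]

lemma dS_eq (σ : Equiv.Perm (Fin K)) :
    dS p S σ = ∑ i ∈ S, oa p 1 S i * (((rkOA 1 S i : ℝ) - (rkOA σ S i : ℝ)) * Real.log p) := by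
  rw [dS]
  refine Finset.sum_congr rfl fun i hi => ?_
  rw [Real.log_div (oa_pos hp0 hp1 hS 1 i).ne' (oa_pos hp0 hp1 hS σ i).ne',
    log_oa hp0 hp1 hS 1 hi, log_oa hp0 hp1 hS σ hi]
  ring

lemma oa_anti {u v : Fin K} (huv : u ≤ v) : oa p 1 S v ≤ oa p 1 S u := by
  have hrk : rkOA (1 : Equiv.Perm (Fin K)) S u ≤ rkOA 1 S v := by
    apply Finset.card_le_card
    intro x hx
    simp only [Finset.mem_filter, Equiv.Perm.coe_one, id_eq] at hx ⊢
    exact Finset.mem_filter.mpr ⟨(Finset.mem_filter.mp hx).1, le_trans (Finset.mem_filter.mp hx).2 huv⟩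
  have hd := oa_denom_pos hp0 hp1 hS
  have hpow : p ^ (rkOA (1 : Equiv.Perm (Fin K)) S v - 1)
      ≤ p ^ (rkOA (1 : Equiv.Perm (Fin K)) S u - 1) :=
    pow_le_pow_of_le_one hp0.le hp1.le (Nat.sub_le_sub_right hrk 1)
  rw [oa, oa]
  have hmul := mul_le_mul_of_nonneg_left hpow (by linarith : (0:ℝ) ≤ 1 - p)
  exact (div_le_div_iff_of_pos_right hd).mpr hmul

end facts

lemma W_eq {K : ℕ} (p : ℝ) (S : Finset (Fin K)) (σ : Equiv.Perm (Fin K)) :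
    (∑ i ∈ S, oa p 1 S i * (rkOA σ S i : ℝ))
      = ∑ i ∈ S, ∑ j ∈ S, (if σ j ≤ σ i then oa p 1 S i else 0) := by
  refine Finset.sum_congr rfl fun i hi => ?_
  rw [rkOA, Finset.card_filter]
  push_cast
  rw [Finset.mul_sum]
  simp [mul_ite, mul_comm]

lemma sym_eq {K : ℕ} {S : Finset (Fin K)} (f : Fin K → ℝ) (π : Equiv.Perm (Fin K)) :
    2 * (∑ i ∈ S, ∑ j ∈ S, (if π j ≤ π i then f i else 0))
      = ∑ i ∈ S, ∑ j ∈ S,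
          ((if π j ≤ π i then f i else 0) + (if π i ≤ π j then f j else 0)) := by
  simp only [Finset.sum_add_distrib]
  rw [two_mul]
  congr 1
  exact Finset.sum_comm

lemma pair_le {K : ℕ} (f : Fin K → ℝ)
    (hanti : ∀ {u v : Fin K}, u ≤ v → f v ≤ f u)
    (σ τ : Equiv.Perm (Fin K)) (a b : Fin K)
    (hinvτ : ∀ u v : Fin K, u < v → τ v < τ u → u = a ∧ v = b)
    (hσab : σ b < σ a) (i j : Fin K) :
    (if τ j ≤ τ i then f i else 0) + (if τ i ≤ τ j then f j else 0)
      ≤ (if σ j ≤ σ i then f i else 0) + (if σ i ≤ σ j then f j else 0) := by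
  rcases eq_or_ne i j with rfl | hij
  · simp
  have hbr : ∀ π : Equiv.Perm (Fin K),
      (if π j ≤ π i then f i else 0) + (if π i ≤ π j then f j else 0)
        = if π j ≤ π i then f i else f j := by
    intro π
    rcases le_or_gt (π j) (π i) with h | h
    · have h2 : ¬ (π i ≤ π j) := fun h' => hij (π.injective (le_antisymm h' h))
      simp [h, h2]
    · simp [not_le.mpr h, h.le]
  rw [hbr σ, hbr τ]
  rcases lt_trichotomy i j with h | h | h
  · by_cases ht : τ j ≤ τ i
    · have htlt : τ j < τ i :=
        lt_of_le_of_ne ht fun e => hij (τ.injective e.symm)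
      obtain ⟨rfl, rfl⟩ := hinvτ i j h htlt
      simp [ht, hσab.le]
    · simp only [if_neg ht]
      split
      · exact hanti h.le
      · exact le_refl _
  · exact absurd h hij
  · by_cases ht : τ j ≤ τ i
    · simp only [if_pos ht]
      split
      · exact le_refl _
      · exact hanti h.le
    · obtain ⟨rfl, rfl⟩ := hinvτ j i h (not_le.mp ht)
      have : ¬ (σ j ≤ σ i) := not_le.mpr hσab
      simp [ht, this]

/-- The only inversion of the adjacent swap is the pair `(m, m+1)`. -/
lemma adjSwap_inv {K m : ℕ} (h : m + 1 < K) (u v : Fin K) (huv : u < v)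
    (hvu : (adjSwap K m) v < (adjSwap K m) u) :
    u = ⟨m, Nat.lt_of_succ_lt h⟩ ∧ v = ⟨m+1, h⟩ := by
  set a : Fin K := ⟨m, Nat.lt_of_succ_lt h⟩
  set b : Fin K := ⟨m+1, h⟩
  have hτ : adjSwap K m = Equiv.swap a b := by rw [adjSwap, dif_pos h]
  rw [hτ] at hvu
  have ham : (a:ℕ) = m := rfl
  have hab : (a:ℕ) + 1 = (b:ℕ) := rfl
  by_cases hua : u = a
  · subst hua
    by_cases hvb : v = b
    · exact ⟨rfl, hvb⟩
    · exfalso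
      have hva : v ≠ a := (ne_of_gt huv)
      rw [Equiv.swap_apply_left, Equiv.swap_apply_of_ne_of_ne hva hvb] at hvu
      rw [Fin.lt_iff_val_lt_val] at hvu huv
      have : (v:ℕ) ≠ (b:ℕ) := fun e => hvb (Fin.ext e)
      omega
  · by_cases hub : u = b
    · exfalso
      subst hub
      have hva : v ≠ a := by
        intro e; subst e
        rw [Fin.lt_iff_val_lt_val] at huv; omega
      have hvb2 : v ≠ b := (ne_of_gt huv)
      rw [Equiv.swap_apply_right, Equiv.swap_apply_of_ne_of_ne hva hvb2] at hvu
      rw [Fin.lt_iff_val_lt_val] at hvu huv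
      omega
    · exfalso
      rw [Equiv.swap_apply_of_ne_of_ne hua hub] at hvu
      by_cases hva : v = a
      · subst hva
        rw [Equiv.swap_apply_left] at hvu
        rw [Fin.lt_iff_val_lt_val] at hvu huv
        have : (u:ℕ) ≠ m := fun e => hua (Fin.ext e)
        omega
      · by_cases hvb : v = b
        · subst hvb
          rw [Equiv.swap_apply_right] at hvu
          rw [Fin.lt_iff_val_lt_val] at hvu huv
          have h1 : (u:ℕ) ≠ m := fun e => hua (Fin.ext e)
          omega
        · rw [Equiv.swap_apply_of_ne_of_ne hva hvb] at hvu
          exact absurd huv (not_lt.mpr hvu.le)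

/-- A non-identity permutation has a descent at some adjacent pair. -/
lemma exists_descent {K : ℕ} (σ : Equiv.Perm (Fin K)) (hσ : σ ≠ 1) :
    ∃ m : ℕ, ∃ h : m + 1 < K, σ ⟨m+1, h⟩ < σ ⟨m, Nat.lt_of_succ_lt h⟩ := by
  by_contra hc
  push_neg at hc
  apply hσ
  have hmono : StrictMono σ := by
    cases K with
    | zero => intro a; exact a.elim0
    | succ n =>
      rw [Fin.strictMono_iff_lt_succ]
      intro i
      have h : (i : ℕ) + 1 < n + 1 := Nat.succ_lt_succ i.isLt
      have := hc i h
      have hcs : (⟨(i:ℕ), Nat.lt_of_succ_lt h⟩ : Fin (n+1)) = Fin.castSucc i := rfl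
      have hsu : (⟨(i:ℕ)+1, h⟩ : Fin (n+1)) = i.succ := rfl
      rw [hcs, hsu] at this
      rcases this.lt_or_eq with h' | h'
      · exact h'
      · exact absurd (σ.injective h') (Fin.castSucc_lt_succ (i := i)).ne
  ext i
  have := Fin.coe_orderIso_apply (hmono.orderIsoOfSurjective σ σ.surjective) i
  simpa [Fin.ext_iff] using this

/-- Dominance lemma (Lemma EC.9): for every non-identity permutation `σ` there
is an adjacent transposition `σ̂_m` with `d_S(σ̂_m) ≤ d_S(σ)` for all display
sets `S` of size `≥ 2`. -/
theorem stmt9 (p : ℝ) (hp0 : 0 < p) (hp1 : p < 1) (K : ℕ) (hK : 2 ≤ K)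
    (σ : Equiv.Perm (Fin K)) (hσ : σ ≠ 1) :
    ∃ m : ℕ, m + 1 < K ∧
      ∀ S : Finset (Fin K), 2 ≤ S.card → dS p S (adjSwap K m) ≤ dS p S σ := by
  obtain ⟨m, h, hσab⟩ := exists_descent σ hσ
  refine ⟨m, h, fun S hS => ?_⟩
  set τ := adjSwap K m with hτdef
  have hL : Real.log p < 0 := Real.log_neg hp0 hp1
  -- combinatorial inequality on weighted ranks
  have hWle : (∑ i ∈ S, oa p 1 S i * (rkOA τ S i : ℝ))
      ≤ ∑ i ∈ S, oa p 1 S i * (rkOA σ S i : ℝ) := by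
    rw [W_eq, W_eq]
    have h2 : 2 * (∑ i ∈ S, ∑ j ∈ S, (if τ j ≤ τ i then oa p 1 S i else 0))
        ≤ 2 * (∑ i ∈ S, ∑ j ∈ S, (if σ j ≤ σ i then oa p 1 S i else 0)) := by
      rw [sym_eq, sym_eq]
      refine Finset.sum_le_sum fun i _ => Finset.sum_le_sum fun j _ => ?_
      exact pair_le (oa p 1 S) (fun huv => oa_anti hp0 hp1 hS huv) σ τ
        ⟨m, Nat.lt_of_succ_lt h⟩ ⟨m+1, h⟩ (adjSwap_inv h) hσab i j
    linarith
  rw [dS_eq hp0 hp1 hS σ, dS_eq hp0 hp1 hS τ]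
  have expand : ∀ π : Equiv.Perm (Fin K),
      (∑ i ∈ S, oa p 1 S i * (((rkOA 1 S i : ℝ) - (rkOA π S i : ℝ)) * Real.log p))
        = Real.log p * ((∑ i ∈ S, oa p 1 S i * (rkOA 1 S i : ℝ))
            - ∑ i ∈ S, oa p 1 S i * (rkOA π S i : ℝ)) := by
    intro π
    rw [mul_sub, Finset.mul_sum, Finset.mul_sum, ← Finset.sum_sub_distrib]
    exact Finset.sum_congr rfl fun i _ => by ring
  rw [expand σ, expand τ]
  have := mul_le_mul_of_nonpos_left (a := (∑ i ∈ S, oa p 1 S i * (rkOA 1 S i : ℝ))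
      - ∑ i ∈ S, oa p 1 S i * (rkOA τ S i : ℝ))
      (b := (∑ i ∈ S, oa p 1 S i * (rkOA 1 S i : ℝ))
      - ∑ i ∈ S, oa p 1 S i * (rkOA σ S i : ℝ))
      (by linarith) hL.le
  linarith
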